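/- Let D be a division ring and let φ : D → D be a bijective additive map (φ(x + y) = φ(x) + φ(y)) such that φ(a⁻¹) = (φ⁻¹(a))⁻¹ for all a ∈ D with a ≠ 0. Then there exist a map σ : D → D which is either a ring automorphism or a ring anti-automorphism, and an element ε ∈ D with ε ≠ 0 and σ(ε) = ε, such that φ(x) = ε·σ(x) for all x ∈ D. Moreover, if σ is an automorphism then σ(σ(x)) = ε⁻¹·x·ε for all x ∈ D, and if σ is an anti-automorphism then σ ∘ σ = id. -/

import Mathlib

section HuaCore

variable {D : Type*} [DivisionRing D]

set_option maxHeartbeats 3200000 in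
theorem hua_core (f : D → D) (hinj : Function.Injective f) (hsurj : Function.Surjective f)
    (hadd : ∀ x y : D, f (x + y) = f x + f y) (h1 : f 1 = 1)
    (htr : ∀ x y : D, f (x * y * x) = f x * f y * f x) :
    (∀ x y : D, f (x * y) = f x * f y) ∨ (∀ x y : D, f (x * y) = f y * f x) := by
  -- basic facts
  have f0 : f 0 = 0 := by
    have h := hadd 0 0
    rw [add_zero] at h
    exact (left_eq_add.mp h)
  have fneg : ∀ x : D, f (-x) = - f x := by
    intro x
    have h := hadd x (-x)
    rw [add_neg_cancel, f0] at h
    exact (neg_eq_of_add_eq_zero_right h.symm).symm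
  have fsub : ∀ x y : D, f (x - y) = f x - f y := by
    intro x y
    rw [sub_eq_add_neg, hadd, fneg, sub_eq_add_neg]
  have fsq : ∀ x : D, f (x * x) = f x * f x := by
    intro x
    have h := htr x 1
    rw [mul_one, h1, mul_one] at h
    exact h
  have R0 : ∀ x y : D, f (x * y + y * x) = f x * f y + f y * f x := by
    intro x y
    have h := fsq (x + y)
    rw [hadd x y] at h
    rw [show (x + y) * (x + y) = x * x + (x * y + y * x) + y * y from by noncomm_ring,
      hadd, hadd, fsq, fsq] at h
    have h2 : f (x * y + y * x)
        = (f x + f y) * (f x + f y) - f x * f x - f y * f y := by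
      rw [← h]; noncomm_ring
    rw [h2]; noncomm_ring
  have T3 : ∀ r x t : D, f (r * x * t + t * x * r) = f r * f x * f t + f t * f x * f r := by
    intro r x t
    have h := htr (r + t) x
    rw [hadd r t] at h
    rw [show (r + t) * x * (r + t) = r * x * r + (r * x * t + t * x * r) + t * x * t from by
      noncomm_ring, hadd, hadd, htr, htr] at h
    have h2 : f (r * x * t + t * x * r)
        = (f r + f t) * f x * (f r + f t) - f r * f x * f r - f t * f x * f t := by
      rw [← h]; noncomm_ring
    rw [h2]; noncomm_ring
  -- pointwise dichotomy
  have ptw : ∀ a b : D, f (a * b) = f a * f b ∨ f (a * b) = f b * f a := by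
    intro a b
    by_contra hcon
    push_neg at hcon
    obtain ⟨hcne, hdne⟩ := hcon
    obtain ⟨c, hcdef⟩ : ∃ c : D, c = f (a*b) - f a * f b := ⟨_, rfl⟩
    obtain ⟨d, hddef⟩ : ∃ d : D, d = f (a*b) - f b * f a := ⟨_, rfl⟩
    have hc : c ≠ 0 := by rw [hcdef]; exact sub_ne_zero.mpr hcne
    have hd : d ≠ 0 := by rw [hddef]; exact sub_ne_zero.mpr hdne
    have hq : f (b*a) = f a * f b + f b * f a - f (a*b) := by
      have h := R0 a b
      rw [hadd] at h
      exact eq_sub_of_add_eq' h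
    have diamA : ∀ x : D, f (x * (a*b - b*a)) = c * f x + f x * d := by
      intro x
      have h₁ := R0 (a*b) x
      have h₂ := T3 a b x
      rw [show x * (a*b - b*a) = ((a*b)*x + x*(a*b)) - (a*b*x + x*b*a) from by noncomm_ring,
        fsub, h₁, h₂, hcdef, hddef]
      noncomm_ring
    have diamB : ∀ x : D, f ((a*b - b*a) * x) = d * f x + f x * c := by
      intro x
      have h₁ := R0 (a*b) x
      have h₂ := T3 b a x
      rw [show (a*b - b*a) * x = ((a*b)*x + x*(a*b)) - (b*a*x + x*a*b) from by noncomm_ring,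
        fsub, h₁, h₂, hcdef, hddef]
      noncomm_ring
    have hfw : f (a*b - b*a) = c + d := by
      rw [fsub, hq, hcdef, hddef]; noncomm_ring
    have R1 : ∀ X : D, c * X * d + d * X * c = 0 := by
      intro X
      obtain ⟨x, rfl⟩ := hsurj X
      have i1 := T3 (a*b) x (b*a)
      have i2 : f ((a*b) * x * (b*a)) = (f a * f b) * f x * (f b * f a) := by
        rw [show (a*b) * x * (b*a) = a * (b*x*b) * a from by noncomm_ring, htr, htr]
        noncomm_ring
      have i3 : f ((b*a) * x * (a*b)) = (f b * f a) * f x * (f a * f b) := by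
        rw [show (b*a) * x * (a*b) = b * (a*x*a) * b from by noncomm_ring, htr, htr]
        noncomm_ring
      rw [hadd, i2, i3, hq] at i1
      have key : c * f x * d + d * f x * c
          = ((f a * f b) * f x * (f b * f a) + (f b * f a) * f x * (f a * f b))
            - (f (a*b) * f x * (f a * f b + f b * f a - f (a*b))
               + (f a * f b + f b * f a - f (a*b)) * f x * f (a*b)) := by
        rw [hcdef, hddef]; noncomm_ring
      rw [key, i1, sub_self]
    have R4b : ∀ X : D, d * c * X + X * (d * c) = 0 := by
      intro X
      obtain ⟨x, rfl⟩ := hsurj X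
      have e1 : f ((a*b - b*a) * (x * (a*b - b*a)))
          = d * (c * f x + f x * d) + (c * f x + f x * d) * c := by
        rw [diamB (x * (a*b - b*a)), diamA x]
      have e2 : f ((a*b - b*a) * (x * (a*b - b*a))) = (c + d) * f x * (c + d) := by
        rw [show (a*b - b*a) * (x * (a*b - b*a)) = (a*b - b*a) * x * (a*b - b*a) from by
          noncomm_ring, htr, hfw]
      have key : d * c * f x + f x * (d * c)
          = (d * (c * f x + f x * d) + (c * f x + f x * d) * c)
            - ((c + d) * f x * (c + d)) + (c * f x * d + d * f x * c) := by
        noncomm_ring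
      rw [key, ← e1, e2, R1 (f x)]
      simp
    have I1 : ∀ X : D, c * X * X * d + X * (d * c) * X = c * X * d * X + X * c * X * d := by
      intro X
      obtain ⟨x, rfl⟩ := hsurj X
      have e1 : f ((x * (a*b - b*a)) * (x * (a*b - b*a)))
          = (c * f x + f x * d) * (c * f x + f x * d) := by
        rw [fsq, diamA]
      have e2 : f ((x * (a*b - b*a)) * (x * (a*b - b*a)))
          = c * (f x * (c + d) * f x) + (f x * (c + d) * f x) * d := by
        rw [show (x * (a*b - b*a)) * (x * (a*b - b*a))
            = (x * (a*b - b*a) * x) * (a*b - b*a) from by noncomm_ring,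
          diamA (x * (a*b - b*a) * x), htr, hfw]
      have key : c * f x * f x * d + f x * (d * c) * f x
          = ((c * f x + f x * d) * (c * f x + f x * d)
             - (c * (f x * (c + d) * f x) + (f x * (c + d) * f x) * d))
            + (c * f x * d * f x + f x * c * f x * d) := by
        noncomm_ring
      rw [key, ← e1, e2, sub_self, zero_add]
    -- the scalar mu and characteristic two
    have Smu : ∀ X : D, X * (d * c⁻¹) + (d * c⁻¹) * X = 0 := by
      intro X
      have h := R1 (c⁻¹ * X)
      rw [show c * (c⁻¹ * X) * d = X * d from by
        rw [← mul_assoc, mul_inv_cancel₀ hc, one_mul]] at h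
      have h2 := congrArg (fun z => z * c⁻¹) h
      simp only [add_mul, zero_mul] at h2
      rw [show d * (c⁻¹ * X) * c * c⁻¹ = (d * c⁻¹) * X from by
        rw [mul_assoc (d * (c⁻¹ * X)) c c⁻¹, mul_inv_cancel₀ hc, mul_one]; noncomm_ring] at h2
      rw [show X * d * c⁻¹ = X * (d * c⁻¹) from by rw [mul_assoc]] at h2
      exact h2
    obtain ⟨μ, hmudef⟩ : ∃ m : D, m = d * c⁻¹ := ⟨_, rfl⟩
    rw [← hmudef] at Smu
    have hmu : μ ≠ 0 := by rw [hmudef]; exact mul_ne_zero hd (inv_ne_zero hc)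
    have htwo : (1 : D) + 1 = 0 := by
      have h := Smu 1
      rw [one_mul, mul_one] at h
      have h2 : ((1:D) + 1) * μ = 0 := by rw [add_mul, one_mul]; exact h
      rcases mul_eq_zero.mp h2 with h3 | h3
      · exact h3
      · exact absurd h3 hmu
    have negid : ∀ z : D, -z = z := by
      intro z
      have h : z + z = 0 := by
        have h4 : z + z = ((1:D) + 1) * z := by noncomm_ring
        rw [h4, htwo, zero_mul]
      exact neg_eq_of_add_eq_zero_left h
    have Smu' : ∀ X : D, X * μ = μ * X := by
      intro X
      have h := eq_neg_of_add_eq_zero_left (Smu X)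
      rw [negid] at h
      exact h
    have hdmc : d = μ * c := by
      rw [hmudef, mul_assoc, inv_mul_cancel₀ hc, mul_one]
    have cent_dc : ∀ X : D, X * (d * c) = d * c * X := by
      intro X
      have h2 := eq_neg_of_add_eq_zero_right (R4b X)
      rw [negid] at h2
      exact h2
    have c2cent : ∀ X : D, X * (c * c) = c * c * X := by
      intro X
      have hmcc : μ * (c * c) = d * c := by rw [hdmc]; noncomm_ring
      have h := cent_dc X
      rw [← hmcc] at h
      have h2 : μ * (X * (c * c)) = μ * (c * c * X) := by
        calc μ * (X * (c*c)) = (μ * X) * (c*c) := by rw [mul_assoc]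
        _ = (X * μ) * (c*c) := by rw [Smu']
        _ = X * (μ * (c*c)) := by rw [mul_assoc]
        _ = μ * (c*c) * X := h
        _ = μ * (c * c * X) := by rw [mul_assoc]
      exact mul_left_cancel₀ hmu h2
    have star : ∀ X : D, c * X * X * c + c * c * (X * X) = c * X * c * X + X * c * X * c := by
      intro X
      have h := I1 X
      have t1 : c * X * X * d = μ * (c * X * X * c) := by
        calc c * X * X * d = c * X * X * (μ * c) := by rw [hdmc]
        _ = (c * X * X * μ) * c := by rw [← mul_assoc]
        _ = (μ * (c * X * X)) * c := by rw [Smu']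
        _ = μ * (c * X * X * c) := by noncomm_ring
      have t2 : X * (d * c) * X = μ * (c * c * (X * X)) := by
        calc X * (d * c) * X = (X * μ) * (c * c) * X := by rw [hdmc]; noncomm_ring
        _ = (μ * X) * (c * c) * X := by rw [Smu']
        _ = μ * ((X * (c * c)) * X) := by noncomm_ring
        _ = μ * ((c * c * X) * X) := by rw [c2cent]
        _ = μ * (c * c * (X * X)) := by noncomm_ring
      have t3 : c * X * d * X = μ * (c * X * c * X) := by
        calc c * X * d * X = ((c * X) * μ) * (c * X) := by rw [hdmc]; noncomm_ring
        _ = (μ * (c * X)) * (c * X) := by rw [Smu']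
        _ = μ * (c * X * c * X) := by noncomm_ring
      have t4 : X * c * X * d = μ * (X * c * X * c) := by
        calc X * c * X * d = ((X * c * X) * μ) * c := by rw [hdmc]; noncomm_ring
        _ = (μ * (X * c * X)) * c := by rw [Smu']
        _ = μ * (X * c * X * c) := by noncomm_ring
      rw [t1, t2, t3, t4, ← mul_add, ← mul_add] at h
      exact mul_left_cancel₀ hmu h
    have ccomm : ∀ X : D, c * X = X * c := by
      intro X
      have hx : X * (c*c) * X = c * c * (X*X) := by
        rw [c2cent]
        noncomm_ring
      have hk : (c*X - X*c) * (c*X - X*c) = 0 := by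
        have e : (c*X - X*c) * (c*X - X*c)
            = (c*X*c*X + X*c*X*c) - (c*X*X*c + X*(c*c)*X) := by noncomm_ring
        rw [e, hx, ← star X, sub_self]
      exact sub_eq_zero.mp (mul_self_eq_zero.mp hk)
    have dcomm : ∀ X : D, d * X = X * d := by
      intro X
      calc d * X = μ * c * X := by rw [hdmc]
      _ = μ * (X * c) := by rw [mul_assoc, ccomm]
      _ = (X * c) * μ := by rw [← Smu']
      _ = X * (c * μ) := by noncomm_ring
      _ = X * (μ * c) := by rw [Smu']
      _ = X * d := by rw [← hdmc]
    -- final contradiction computations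
    have hp : f (a*b) = f a * f b + c := by rw [hcdef]; noncomm_ring
    have hv : f b * f a = f a * f b + (c - d) := by rw [hcdef, hddef]; noncomm_ring
    have Fa2b : f (a * (a*b)) = f a * (f a * f b) := by
      have h := R0 a (a*b)
      rw [hadd, htr a b] at h
      have h2 := eq_sub_of_add_eq h
      rw [hp] at h2
      rw [show f a * (f a * f b + c) + (f a * f b + c) * f a - f a * f b * f a
          = f a * (f a * f b) + (f a * c + c * f a) from by noncomm_ring, ccomm (f a),
        show f a * c + f a * c = ((1:D)+1) * (f a * c) from by noncomm_ring, htwo,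
        zero_mul, add_zero] at h2
      exact h2
    have Fa2b2 : f ((a * (a*b)) * b) = (f a * f a) * (f b * f b) := by
      have h := R0 (a * (a*b)) b
      rw [hadd, show b * (a * (a*b)) = b * (a*a) * b from by noncomm_ring, htr b (a*a),
        fsq a, Fa2b] at h
      have h2 := eq_sub_of_add_eq h
      rw [h2]; noncomm_ring
    have Fawb : f ((a * (a*b - b*a)) * b) = (c + d) * f (a*b) := by
      have h := R0 (a * (a*b - b*a)) b
      rw [hadd, show b * (a * (a*b - b*a)) = (b*a) * (a*b - b*a) from by noncomm_ring,
        diamA (b*a), diamA a, hq] at h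
      have h2 := eq_sub_of_add_eq h
      rw [h2]
      rw [show (c * f a + f a * d) * f b + f b * (c * f a + f a * d)
          - (c * (f a * f b + f b * f a - f (a*b)) + (f a * f b + f b * f a - f (a*b)) * d)
          = c * (f a * f b) + (f a * d) * f b + (f b * c) * f a + (f b * f a) * d
            - c * (f a * f b + f b * f a - f (a*b))
            - (f a * f b + f b * f a - f (a*b)) * d from by noncomm_ring]
      rw [← dcomm (f a), ← ccomm (f b), ← dcomm (f b * f a),
        ← dcomm (f a * f b + f b * f a - f (a*b))]
      rw [show c * (f a * f b) + (d * f a) * f b + (c * f b) * f a + d * (f b * f a)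
            - c * (f a * f b + f b * f a - f (a*b))
            - d * (f a * f b + f b * f a - f (a*b))
          = (c + d) * f (a*b) from by noncomm_ring]
    have E2 : f (a*b) * f (a*b) = (f a * f b) * (f a * f b) + c * c := by
      rw [hp]
      rw [show (f a * f b + c) * (f a * f b + c)
          = (f a * f b) * (f a * f b) + c * c + ((f a * f b) * c + c * (f a * f b))
            from by noncomm_ring, ← ccomm (f a * f b),
        show c * (f a * f b) + c * (f a * f b) = ((1:D)+1) * (c * (f a * f b)) from by
          noncomm_ring, htwo, zero_mul, add_zero]
    have ecomm : ∀ X : D, (c - d) * X = X * (c - d) := by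
      intro X
      rw [sub_mul, mul_sub, ccomm, dcomm]
    have E3 : (f a * f b) * (f a * f b)
        = (f a * f a) * (f b * f b) + (c - d) * (f a * f b) := by
      calc (f a * f b) * (f a * f b) = f a * (f b * f a) * f b := by noncomm_ring
      _ = f a * (f a * f b + (c - d)) * f b := by rw [hv]
      _ = (f a * f a) * (f b * f b) + (f a * (c - d)) * f b := by noncomm_ring
      _ = (f a * f a) * (f b * f b) + ((c - d) * f a) * f b := by rw [← ecomm (f a)]
      _ = (f a * f a) * (f b * f b) + (c - d) * (f a * f b) := by noncomm_ring
    have E1 : f (a*b) * f (a*b) = (f a * f a) * (f b * f b) - (c + d) * f (a*b) := by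
      have h := fsq (a*b)
      rw [show (a*b) * (a*b) = (a * (a*b)) * b - (a * (a*b - b*a)) * b from by noncomm_ring,
        fsub, Fa2b2, Fawb] at h
      exact h.symm
    have hcomb : (f a * f a) * (f b * f b) - (c + d) * f (a*b)
        = (f a * f a) * (f b * f b) + ((c - d) * (f a * f b) + c * c) := by
      rw [← E1, E2, E3]
      noncomm_ring
    have hzero : (c + d) * f (a*b) + ((c - d) * (f a * f b) + c * c) = 0 := by
      rw [sub_eq_add_neg] at hcomb
      have h2 := add_left_cancel hcomb
      rw [negid] at h2
      rw [← h2]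
      rw [show (c+d) * f (a*b) + (c+d) * f (a*b) = ((1:D)+1) * ((c+d) * f (a*b)) from by
        noncomm_ring, htwo, zero_mul]
    have hdc0 : d * c = 0 := by
      have expand : (c + d) * f (a*b) + ((c - d) * (f a * f b) + c * c)
          = d * c + (((1:D)+1) * (c * (f a * f b)) + ((1:D)+1) * (c * c)) := by
        rw [hp]; noncomm_ring
      rw [expand, htwo, zero_mul, zero_mul, add_zero, add_zero] at hzero
      exact hzero
    exact absurd hdc0 (mul_ne_zero hd hc)
  -- patching: fix the first argument
  have fixa : ∀ a : D, (∀ b : D, f (a*b) = f a * f b) ∨ (∀ b : D, f (a*b) = f b * f a) := by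
    intro a
    by_contra hcon
    push_neg at hcon
    obtain ⟨⟨b₁, hb₁⟩, ⟨b₂, hb₂⟩⟩ := hcon
    have h1' : f (a*b₁) = f b₁ * f a := (ptw a b₁).resolve_left hb₁
    have h2' : f (a*b₂) = f a * f b₂ := (ptw a b₂).resolve_right hb₂
    have hsum := ptw a (b₁ + b₂)
    rw [show a*(b₁+b₂) = a*b₁ + a*b₂ from by noncomm_ring, hadd, hadd, h1', h2'] at hsum
    rcases hsum with h | h
    · rw [mul_add] at h
      exact hb₁ (h1'.trans (add_right_cancel h))
    · rw [add_mul] at h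
      exact hb₂ (h2'.trans (add_left_cancel h))
  by_contra hcon
  push_neg at hcon
  obtain ⟨⟨a₁, b₁, hb₁⟩, ⟨a₂, b₂, hb₂⟩⟩ := hcon
  have H1 : ∀ b : D, f (a₁ * b) = f b * f a₁ := by
    rcases fixa a₁ with h | h
    · exact absurd (h b₁) hb₁
    · exact h
  have H2 : ∀ b : D, f (a₂ * b) = f a₂ * f b := by
    rcases fixa a₂ with h | h
    · exact h
    · exact absurd (h b₂) hb₂
  rcases fixa (a₁ + a₂) with h | h
  · have hx := h b₁
    rw [show (a₁+a₂)*b₁ = a₁*b₁ + a₂*b₁ from by noncomm_ring, hadd, hadd, H2 b₁] at hx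
    rw [add_mul] at hx
    exact hb₁ (add_right_cancel hx)
  · have hx := h b₂
    rw [show (a₁+a₂)*b₂ = a₁*b₂ + a₂*b₂ from by noncomm_ring, hadd, hadd, H1 b₂] at hx
    rw [mul_add] at hx
    exact hb₂ (add_left_cancel hx)


set_option maxHeartbeats 1600000 in
theorem flip_aux {D : Type*} [DivisionRing D]
    (φ : D ≃+ D)
    (hflip : ∀ a : D, a ≠ 0 → φ a⁻¹ = (φ.symm a)⁻¹) :
    ∃ σ : D → D, Function.Bijective σ ∧
      (∀ x y : D, σ (x + y) = σ x + σ y) ∧ σ 1 = 1 ∧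
      ∃ ε : D, ε ≠ 0 ∧ σ ε = ε ∧ (∀ x : D, φ x = ε * σ x) ∧
        (((∀ x y : D, σ (x * y) = σ x * σ y) ∧ ∀ x : D, σ (σ x) = ε⁻¹ * x * ε) ∨
         ((∀ x y : D, σ (x * y) = σ y * σ x) ∧ ∀ x : D, σ (σ x) = x)) := by
  have hφne : ∀ a : D, a ≠ 0 → φ a ≠ 0 := by
    intro a ha h
    exact ha (φ.injective (by rw [h, map_zero]))
  have hψne : ∀ a : D, a ≠ 0 → φ.symm a ≠ 0 := by
    intro a ha h
    exact ha (φ.symm.injective (by rw [h, map_zero]))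
  have hflip2 : ∀ a : D, a ≠ 0 → φ.symm a⁻¹ = (φ a)⁻¹ := by
    intro a ha
    have h := hflip (φ a) (hφne a ha)
    rw [AddEquiv.symm_apply_apply] at h
    have h2 := congrArg φ.symm h
    rw [AddEquiv.symm_apply_apply] at h2
    exact h2.symm
  -- Hua's identity in a division ring
  have hua : ∀ a b : D, a ≠ 0 → b ≠ 0 → a * b ≠ 1 →
      a - (a⁻¹ + (b⁻¹ - a)⁻¹)⁻¹ = a * b * a := by
    intro a b ha hb hab
    have hc : b⁻¹ - a ≠ 0 := by
      intro h
      apply hab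
      have h2 : b⁻¹ = a := by rwa [sub_eq_zero] at h
      rw [← h2, inv_mul_cancel₀ hb]
    have e1 : a⁻¹ * b⁻¹ = a⁻¹ * (b⁻¹ - a) + 1 := by
      rw [mul_sub, inv_mul_cancel₀ ha, sub_add_cancel]
    have key : a⁻¹ * b⁻¹ * (b⁻¹ - a)⁻¹ = a⁻¹ + (b⁻¹ - a)⁻¹ := by
      rw [e1, add_mul, one_mul, mul_assoc, mul_inv_cancel₀ hc, mul_one]
    have tinv : (a⁻¹ + (b⁻¹ - a)⁻¹)⁻¹ = (b⁻¹ - a) * b * a := by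
      rw [← key, mul_inv_rev, mul_inv_rev, inv_inv, inv_inv, inv_inv]
      noncomm_ring
    rw [tinv, sub_mul, inv_mul_cancel₀ hb, sub_mul, one_mul, sub_sub_cancel]
  -- the triple identity for φ
  have ftriple : ∀ a b : D, φ (a * b * a) = φ a * φ.symm b * φ a := by
    intro a b
    rcases eq_or_ne a 0 with rfl | ha
    · simp
    rcases eq_or_ne b 0 with rfl | hb
    · simp
    rcases eq_or_ne (a * b) 1 with hab | hab
    · have hb' : b = a⁻¹ := (inv_eq_of_mul_eq_one_right hab).symm
      subst hb'
      rw [show a * a⁻¹ * a = a from by rw [mul_inv_cancel₀ ha, one_mul]]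
      rw [hflip2 a ha, mul_inv_cancel₀ (hφne a ha), one_mul]
    · have hc : b⁻¹ - a ≠ 0 := by
        intro h
        apply hab
        have h2 : b⁻¹ = a := by rwa [sub_eq_zero] at h
        rw [← h2, inv_mul_cancel₀ hb]
      have ht : a⁻¹ + (b⁻¹ - a)⁻¹ ≠ 0 := by
        intro h
        have h2 := eq_neg_of_add_eq_zero_right h
        have h3 : b⁻¹ - a = -a := by
          rw [← inv_inv (b⁻¹ - a), h2, inv_neg, inv_inv]
        have h4 : b⁻¹ = 0 := by
          have h5 := sub_eq_iff_eq_add.mp h3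
          rwa [neg_add_cancel] at h5
        exact inv_ne_zero hb h4
      have happ : φ (a - (a⁻¹ + (b⁻¹ - a)⁻¹)⁻¹) = φ (a * b * a) := by
        rw [hua a b ha hb hab]
      rw [map_sub, hflip _ ht, map_add, hflip2 a ha, hflip2 (b⁻¹ - a) hc, map_sub,
        hflip b hb] at happ
      have hA : φ a ≠ 0 := hφne a ha
      have hB : φ.symm b ≠ 0 := hψne b hb
      have hAB : φ a * φ.symm b ≠ 1 := by
        intro h
        apply hab
        have h2 : φ.symm b = (φ a)⁻¹ := (inv_eq_of_mul_eq_one_right h).symm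
        rw [← hflip2 a ha] at h2
        have h3 := φ.symm.injective h2
        rw [h3]
        exact mul_inv_cancel₀ ha
      exact happ.symm.trans (hua (φ a) (φ.symm b) hA hB hAB)
  -- the element ε and the map σ
  obtain ⟨ε, hε⟩ : ∃ e : D, e = φ 1 := ⟨_, rfl⟩
  have hεne : ε ≠ 0 := by rw [hε]; exact hφne 1 one_ne_zero
  have hψ : ∀ b : D, φ.symm b = ε⁻¹ * φ b * ε⁻¹ := by
    intro b
    have h := ftriple 1 b
    rw [one_mul, mul_one] at h
    rw [← hε] at h
    rw [h, show ε⁻¹ * (ε * φ.symm b * ε) * ε⁻¹ = (ε⁻¹ * ε) * φ.symm b * (ε * ε⁻¹) from by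
      noncomm_ring, inv_mul_cancel₀ hεne, mul_inv_cancel₀ hεne, one_mul, mul_one]
  have σtriple : ∀ a b : D, ε⁻¹ * φ (a * b * a) = (ε⁻¹ * φ a) * (ε⁻¹ * φ b) * (ε⁻¹ * φ a) := by
    intro a b
    rw [ftriple, hψ b]
    noncomm_ring
  have σbij : Function.Bijective (fun x : D => ε⁻¹ * φ x) := by
    constructor
    · intro x y h
      have h2 : ε⁻¹ * φ x = ε⁻¹ * φ y := h
      exact φ.injective (mul_left_cancel₀ (inv_ne_zero hεne) h2)
    · intro z
      refine ⟨φ.symm (ε * z), ?_⟩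
      show ε⁻¹ * φ (φ.symm (ε * z)) = z
      rw [AddEquiv.apply_symm_apply, ← mul_assoc, inv_mul_cancel₀ hεne, one_mul]
  have σadd : ∀ x y : D, ε⁻¹ * φ (x + y) = ε⁻¹ * φ x + ε⁻¹ * φ y := by
    intro x y
    rw [map_add, mul_add]
  have σ1 : ε⁻¹ * φ 1 = 1 := by rw [← hε, inv_mul_cancel₀ hεne]
  have hdi := hua_core (D := D) (fun x : D => ε⁻¹ * φ x) σbij.1 σbij.2 σadd σ1
    (fun x y => σtriple x y)
  have hom' : (∀ x y : D, ε⁻¹ * φ (x * y) = (ε⁻¹ * φ x) * (ε⁻¹ * φ y))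
      ∨ (∀ x y : D, ε⁻¹ * φ (x * y) = (ε⁻¹ * φ y) * (ε⁻¹ * φ x)) := hdi
  have σinv : ∀ x : D, x ≠ 0 → ε⁻¹ * φ x⁻¹ = (ε⁻¹ * φ x)⁻¹ := by
    intro x hx
    rw [hflip x hx, hψ x, mul_inv_rev (ε⁻¹ * φ x) ε⁻¹, inv_inv, ← mul_assoc,
      inv_mul_cancel₀ hεne, one_mul]
  have hφεinv : φ ε⁻¹ = 1 := by
    have h := hψ 1
    rw [← hε, inv_mul_cancel₀ hεne, one_mul] at h
    have h2 := congrArg φ h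
    rw [AddEquiv.apply_symm_apply] at h2
    exact h2.symm
  have σεinv : ε⁻¹ * φ ε⁻¹ = ε⁻¹ := by rw [hφεinv, mul_one]
  have σε : ε⁻¹ * φ ε = ε := by
    have h := σinv ε⁻¹ (inv_ne_zero hεne)
    rw [inv_inv] at h
    rw [h, σεinv, inv_inv]
  have hsq : ∀ y : D, ε * (ε⁻¹ * φ (ε⁻¹ * φ y * ε⁻¹)) = y := by
    intro y
    have h : φ (φ.symm y) = y := φ.apply_symm_apply y
    rw [hψ y] at h
    rw [← mul_assoc, mul_inv_cancel₀ hεne, one_mul]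
    exact h
  have cancel : ∀ Z : D, ε⁻¹ * (ε * (Z * ε⁻¹)) * ε = Z := by
    intro Z
    rw [show ε⁻¹ * (ε * (Z * ε⁻¹)) * ε = (ε⁻¹ * ε) * Z * (ε⁻¹ * ε) from by noncomm_ring,
      inv_mul_cancel₀ hεne, one_mul, mul_one]
  refine ⟨fun x : D => ε⁻¹ * φ x, σbij, σadd, σ1, ε, hεne, σε, ?_, ?_⟩
  · intro x
    show φ x = ε * (ε⁻¹ * φ x)
    rw [← mul_assoc, mul_inv_cancel₀ hεne, one_mul]
  · rcases hom' with hom | anti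
    · left
      refine ⟨hom, ?_⟩
      intro x
      show ε⁻¹ * φ (ε⁻¹ * φ x) = ε⁻¹ * x * ε
      have h := hsq x
      rw [hom (ε⁻¹ * φ x) ε⁻¹, σεinv] at h
      calc ε⁻¹ * φ (ε⁻¹ * φ x)
          = ε⁻¹ * (ε * ((ε⁻¹ * φ (ε⁻¹ * φ x)) * ε⁻¹)) * ε := (cancel _).symm
        _ = ε⁻¹ * x * ε := by rw [h]
    · right
      refine ⟨anti, ?_⟩
      intro x
      show ε⁻¹ * φ (ε⁻¹ * φ x) = x
      have h := hsq x
      rw [anti (ε⁻¹ * φ x) ε⁻¹, σεinv] at h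
      rw [← mul_assoc, mul_inv_cancel₀ hεne, one_mul] at h
      exact h

end HuaCore


/-- A bijective additive map `φ` of a division ring `D` with
`φ(a⁻¹) = (φ⁻¹(a))⁻¹` for all `a ≠ 0` is of the form `φ(x) = ε·σ(x)` where `σ`
is an automorphism or anti-automorphism of `D` and `ε ≠ 0` with `σ(ε) = ε`;
moreover `σ²(x) = ε⁻¹·x·ε` in the automorphism case and `σ² = id` in the
anti-automorphism case. -/
theorem flip_of_division_ring {D : Type*} [DivisionRing D]
    (φ : D ≃+ D)
    (hflip : ∀ a : D, a ≠ 0 → φ a⁻¹ = (φ.symm a)⁻¹) :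
    ∃ σ : D → D, Function.Bijective σ ∧
      (∀ x y : D, σ (x + y) = σ x + σ y) ∧ σ 1 = 1 ∧
      ∃ ε : D, ε ≠ 0 ∧ σ ε = ε ∧ (∀ x : D, φ x = ε * σ x) ∧
        (((∀ x y : D, σ (x * y) = σ x * σ y) ∧ ∀ x : D, σ (σ x) = ε⁻¹ * x * ε) ∨
         ((∀ x y : D, σ (x * y) = σ y * σ x) ∧ ∀ x : D, σ (σ x) = x)) := by
  exact flip_aux φ hflip
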